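/- Two V-categories A and B are bisimilar if and only if there exists a cospan A → C ← B of surjective functional bisimulations. -/

import Mathlib

/-- A quantaloid: a (small) locally ordered bicategory whose hom-posets are
complete lattices and whose composition preserves suprema in each variable. -/
structure Quantaloid where
  Obj : Type
  Hom : Obj → Obj → Type
  [lat : ∀ u v : Obj, CompleteLattice (Hom u v)]
  comp : ∀ {u v w : Obj}, Hom u v → Hom v w → Hom u w
  id : ∀ u : Obj, Hom u u
  comp_assoc : ∀ {u v w x : Obj} (f : Hom u v) (g : Hom v w) (h : Hom w x),
    comp (comp f g) h = comp f (comp g h)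
  id_comp : ∀ {u v : Obj} (f : Hom u v), comp (id u) f = f
  comp_id : ∀ {u v : Obj} (f : Hom u v), comp f (id v) = f
  comp_sSup_left : ∀ {u v w : Obj} (S : Set (Hom u v)) (g : Hom v w),
    comp (sSup S) g = sSup ((fun f => comp f g) '' S)
  comp_sSup_right : ∀ {u v w : Obj} (f : Hom u v) (S : Set (Hom v w)),
    comp f (sSup S) = sSup ((fun g => comp f g) '' S)

attribute [instance] Quantaloid.lat

/-- Transport of homs along equalities of objects. -/
def Quantaloid.cast (V : Quantaloid) {u u' v v' : V.Obj} (hu : u = u') (hv : v = v')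
    (f : V.Hom u v) : V.Hom u' v' := hu ▸ hv ▸ f


namespace Quantaloid

variable {V : Quantaloid} {u u' u'' v v' v'' w w' : V.Obj}

@[simp] lemma cast_rfl (f : V.Hom u v) : V.cast rfl rfl f = f := rfl

lemma cast_mono (hu : u = u') (hv : v = v') {f g : V.Hom u v} (h : f ≤ g) :
    V.cast hu hv f ≤ V.cast hu hv g := by subst hu; subst hv; exact h

lemma cast_cast (hu : u = u') (hv : v = v') (hu' : u' = u'') (hv' : v' = v'')
    (f : V.Hom u v) :
    V.cast hu' hv' (V.cast hu hv f) = V.cast (hu.trans hu') (hv.trans hv') f := by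
  subst hu hv hu' hv'; rfl

lemma cast_le_iff (hu : u = u') (hv : v = v') (f : V.Hom u v) (g : V.Hom u' v') :
    V.cast hu hv f ≤ g ↔ f ≤ V.cast hu.symm hv.symm g := by subst hu hv; rfl

lemma le_cast_iff (hu : u = u') (hv : v = v') (f : V.Hom u v) (g : V.Hom u' v') :
    g ≤ V.cast hu hv f ↔ V.cast hu.symm hv.symm g ≤ f := by subst hu hv; rfl

lemma cast_eq_iff (hu : u = u') (hv : v = v') (f : V.Hom u v) (g : V.Hom u' v') :
    V.cast hu hv f = g ↔ f = V.cast hu.symm hv.symm g := by subst hu hv; rfl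

@[simp] lemma cast_bot (hu : u = u') (hv : v = v') :
    V.cast hu hv (⊥ : V.Hom u v) = ⊥ := by subst hu hv; rfl

lemma cast_sSup (hu : u = u') (hv : v = v') (S : Set (V.Hom u v)) :
    V.cast hu hv (sSup S) = sSup (V.cast hu hv '' S) := by
  subst hu hv; exact congrArg sSup (Set.image_id' S).symm

lemma cast_comp (hu : u = u') (hv : v = v') (hw : w = w')
    (f : V.Hom u v) (g : V.Hom v w) :
    V.cast hu hw (V.comp f g) = V.comp (V.cast hu hv f) (V.cast hv hw g) := by
  subst hu hv hw; rfl

lemma comp_bot (f : V.Hom u v) : V.comp f (⊥ : V.Hom v w) = ⊥ := by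
  have := V.comp_sSup_right f (∅ : Set (V.Hom v w))
  simpa using this

lemma bot_comp (g : V.Hom v w) : V.comp (⊥ : V.Hom u v) g = ⊥ := by
  have := V.comp_sSup_left (∅ : Set (V.Hom u v)) g
  simpa using this

lemma comp_le_comp {f f' : V.Hom u v} {g g' : V.Hom v w} (hf : f ≤ f') (hg : g ≤ g') :
    V.comp f g ≤ V.comp f' g' := by
  have h1 : V.comp f g ≤ V.comp f' g := by
    have := V.comp_sSup_left {f, f'} g
    have hs : sSup {f, f'} = f' := by simp [sSup_insert, sup_eq_right.2 hf]
    rw [hs] at this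
    rw [this]
    exact le_sSup ⟨f, by simp, rfl⟩
  have h2 : V.comp f' g ≤ V.comp f' g' := by
    have := V.comp_sSup_right f' {g, g'}
    have hs : sSup {g, g'} = g' := by simp [sSup_insert, sup_eq_right.2 hg]
    rw [hs] at this
    rw [this]
    exact le_sSup ⟨g, by simp, rfl⟩
  exact h1.trans h2

@[simp] lemma cast_self (hu : u = u) (hv : v = v) (f : V.Hom u v) : V.cast hu hv f = f := rfl

lemma cast_sSup_le_iff (hu : u = u') (hv : v = v') (S : Set (V.Hom u v)) (g : V.Hom u' v') :
    V.cast hu hv (sSup S) ≤ g ↔ ∀ f ∈ S, V.cast hu hv f ≤ g := by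
  subst hu hv; simp only [cast_rfl]; exact sSup_le_iff

end Quantaloid

/-- A `V`-category. -/
structure VCat (V : Quantaloid) where
  Obj : Type
  pt : Obj → V.Obj
  hom : ∀ a b : Obj, V.Hom (pt a) (pt b)
  id_le : ∀ a, V.id (pt a) ≤ hom a a
  comp_le : ∀ a b c, V.comp (hom a b) (hom b c) ≤ hom a c

/-- A simulation from `A` to `B`. -/
def IsSimulation (V : Quantaloid) (A B : VCat V) (R : A.Obj → B.Obj → Prop) : Prop :=
  (∀ a b, R a b → A.pt a = B.pt b) ∧
  ∀ (a : A.Obj) (b : B.Obj), R a b → ∀ (a' : A.Obj) (h : A.pt a = B.pt b),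
    V.cast h rfl (A.hom a a') ≤
      sSup {x : V.Hom (B.pt b) (A.pt a') |
        ∃ (b' : B.Obj) (h' : A.pt a' = B.pt b'), R a' b' ∧ x = V.cast rfl h'.symm (B.hom b b')}

/-- A bisimulation from `A` to `B`. -/
def IsBisimulation (V : Quantaloid) (A B : VCat V) (R : A.Obj → B.Obj → Prop) : Prop :=
  IsSimulation V A B R ∧ IsSimulation V B A (fun b a => R a b)

/-- Bisimilarity of `V`-categories. -/
def Bisimilar (V : Quantaloid) (A B : VCat V) : Prop :=
  ∃ R, IsBisimulation V A B R ∧ (∀ a, ∃ b, R a b) ∧ (∀ b, ∃ a, R a b)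

/-- A `V`-functor. -/
structure VFunctor (V : Quantaloid) (A B : VCat V) where
  toFun : A.Obj → B.Obj
  pt_eq : ∀ a, B.pt (toFun a) = A.pt a
  map_le : ∀ a a',
    V.cast (pt_eq a).symm (pt_eq a').symm (A.hom a a') ≤ B.hom (toFun a) (toFun a')

/-- A surjective functional bisimulation (an "open" map). -/
def VFunctor.IsSFB {V : Quantaloid} {A B : VCat V} (f : VFunctor V A B) : Prop :=
  Function.Surjective f.toFun ∧
  ∀ (a : A.Obj) (b : B.Obj),
    B.hom (f.toFun a) b =
      sSup {x : V.Hom (B.pt (f.toFun a)) (B.pt b) |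
        ∃ (a' : A.Obj) (h : f.toFun a' = b),
          x = V.cast (f.pt_eq a).symm ((f.pt_eq a').symm.trans (congrArg B.pt h)) (A.hom a a')}
namespace BIC

open Quantaloid

variable {V : Quantaloid} (A B : VCat V) (R : A.Obj → B.Obj → Prop)

/-- Points of the disjoint sum. -/
def ptW : A.Obj ⊕ B.Obj → V.Obj := Sum.elim A.pt B.pt

/-- Homs of the disjoint sum, with `⊥` between components. -/
def homW : ∀ x y : A.Obj ⊕ B.Obj, V.Hom (ptW A B x) (ptW A B y)
  | .inl a, .inl a' => A.hom a a'
  | .inr b, .inr b' => B.hom b b'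
  | .inl _, .inr _ => ⊥
  | .inr _, .inl _ => ⊥

/-- One zigzag step. -/
def Step : (A.Obj ⊕ B.Obj) → (A.Obj ⊕ B.Obj) → Prop
  | .inl a, .inr b => R a b
  | .inr b, .inl a => R a b
  | _, _ => False

/-- Zigzag equivalence. -/
def E : (A.Obj ⊕ B.Obj) → (A.Obj ⊕ B.Obj) → Prop := Relation.EqvGen (Step A B R)

lemma ptE (hR : IsBisimulation V A B R) {x y : A.Obj ⊕ B.Obj} (h : E A B R x y) :
    ptW A B x = ptW A B y := by
  induction h with
  | rel x y hxy =>
    cases x with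
    | inl a => cases y with
      | inl a' => exact hxy.elim
      | inr b => exact hR.1.1 a b hxy
    | inr b => cases y with
      | inl a => exact hR.2.1 b a hxy
      | inr b' => exact hxy.elim
  | refl x => rfl
  | symm x y _ ih => exact ih.symm
  | trans x y z _ _ ih1 ih2 => exact ih1.trans ih2

lemma homW_id_le (w : A.Obj ⊕ B.Obj) : V.id (ptW A B w) ≤ homW A B w w := by
  cases w with
  | inl a => exact A.id_le a
  | inr b => exact B.id_le b

lemma homW_comp_le (x y z : A.Obj ⊕ B.Obj) :
    V.comp (homW A B x y) (homW A B y z) ≤ homW A B x z := by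
  rcases x with a | b <;> rcases y with a1 | b1 <;> rcases z with a2 | b2 <;>
    simp only [homW]
  all_goals first
    | exact A.comp_le _ _ _
    | exact B.comp_le _ _ _
    | exact bot_le
    | exact le_of_eq (comp_bot _)
    | exact le_of_eq (bot_comp _)
    | exact le_of_eq_of_le (comp_bot _) bot_le

/-- The hom of the would-be quotient, computed from a representative `x`
and any member of the class of `y₀`. -/
def SS (x y₀ : A.Obj ⊕ B.Obj) : V.Hom (ptW A B x) (ptW A B y₀) :=
  sSup {f | ∃ z, ∃ h : ptW A B z = ptW A B y₀, E A B R z y₀ ∧ f = V.cast rfl h (homW A B x z)}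

lemma le_SS {z y₀ : A.Obj ⊕ B.Obj} (x : A.Obj ⊕ B.Obj) (h : ptW A B z = ptW A B y₀)
    (hz : E A B R z y₀) : V.cast rfl h (homW A B x z) ≤ SS A B R x y₀ :=
  le_sSup ⟨z, h, hz, rfl⟩

end BIC

namespace BIC

open Quantaloid Relation

variable {V : Quantaloid} (A B : VCat V) (R : A.Obj → B.Obj → Prop)

lemma SS_le_iff (x y₀ : A.Obj ⊕ B.Obj) (g : V.Hom (ptW A B x) (ptW A B y₀)) :
    SS A B R x y₀ ≤ g ↔
      ∀ z (h : ptW A B z = ptW A B y₀), E A B R z y₀ →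
        V.cast rfl h (homW A B x z) ≤ g := by
  constructor
  · intro H z h hz; exact le_trans (le_SS A B R x h hz) H
  · intro H; apply sSup_le; rintro f ⟨z, h, hz, rfl⟩; exact H z h hz

lemma SS_step_A (hR : IsBisimulation V A B R) {a : A.Obj} {b : B.Obj} (hab : R a b)
    (h : ptW A B (Sum.inr b) = ptW A B (Sum.inl a)) (y₀ : A.Obj ⊕ B.Obj) :
    V.cast h rfl (SS A B R (Sum.inr b) y₀) ≤ SS A B R (Sum.inl a) y₀ := by
  rw [cast_le_iff, SS_le_iff]
  intro z hz hEz
  cases z with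
  | inl a'' =>
    have hb : homW A B (Sum.inr b) (Sum.inl a'') = ⊥ := rfl
    rw [hb, cast_bot]; exact bot_le
  | inr b'' =>
    have hsim := hR.2.2 b a hab b'' h
    have step1 : V.cast rfl hz
        (sSup {x : V.Hom (A.pt a) (B.pt b'') |
          ∃ (a₂ : A.Obj) (h' : B.pt b'' = A.pt a₂), (fun b a => R a b) b'' a₂ ∧
            x = V.cast rfl h'.symm (A.hom a a₂)}) ≤ SS A B R (Sum.inl a) y₀ := by
      refine (cast_sSup_le_iff rfl hz _ _).mpr ?_
      rintro x ⟨a₂, h', hra, rfl⟩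
      have hE2 : E A B R (Sum.inl a₂) y₀ :=
        EqvGen.trans _ _ _
          (show E A B R (Sum.inl a₂) (Sum.inr b'') from EqvGen.rel _ _ hra) hEz
      have hgen := le_SS A B R (z := Sum.inl a₂) (Sum.inl a)
        (h'.symm.trans hz : ptW A B (Sum.inl a₂) = ptW A B y₀) hE2
      exact (Quantaloid.cast_cast _ _ _ _ _).trans_le hgen
    have h2 : V.cast rfl hz (V.cast h rfl (B.hom b b'')) ≤ SS A B R (Sum.inl a) y₀ :=
      le_trans (cast_mono rfl hz hsim) step1
    rw [le_cast_iff, Quantaloid.cast_cast]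
    exact (Quantaloid.cast_cast _ _ _ _ _).symm.trans_le h2

lemma SS_step_B (hR : IsBisimulation V A B R) {a : A.Obj} {b : B.Obj} (hab : R a b)
    (h : ptW A B (Sum.inl a) = ptW A B (Sum.inr b)) (y₀ : A.Obj ⊕ B.Obj) :
    V.cast h rfl (SS A B R (Sum.inl a) y₀) ≤ SS A B R (Sum.inr b) y₀ := by
  rw [cast_le_iff, SS_le_iff]
  intro z hz hEz
  cases z with
  | inr b'' =>
    have hb : homW A B (Sum.inl a) (Sum.inr b'') = ⊥ := rfl
    rw [hb, cast_bot]; exact bot_le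
  | inl a'' =>
    have hsim := hR.1.2 a b hab a'' h
    have step1 : V.cast rfl hz
        (sSup {x : V.Hom (B.pt b) (A.pt a'') |
          ∃ (b₂ : B.Obj) (h' : A.pt a'' = B.pt b₂), R a'' b₂ ∧
            x = V.cast rfl h'.symm (B.hom b b₂)}) ≤ SS A B R (Sum.inr b) y₀ := by
      refine (cast_sSup_le_iff rfl hz _ _).mpr ?_
      rintro x ⟨b₂, h', hra, rfl⟩
      have hE2 : E A B R (Sum.inr b₂) y₀ :=
        EqvGen.trans _ _ _
          (show E A B R (Sum.inr b₂) (Sum.inl a'') from EqvGen.rel _ _ hra) hEz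
      have hgen := le_SS A B R (z := Sum.inr b₂) (Sum.inr b)
        (h'.symm.trans hz : ptW A B (Sum.inr b₂) = ptW A B y₀) hE2
      exact (Quantaloid.cast_cast _ _ _ _ _).trans_le hgen
    have h2 : V.cast rfl hz (V.cast h rfl (A.hom a a'')) ≤ SS A B R (Sum.inr b) y₀ :=
      le_trans (cast_mono rfl hz hsim) step1
    rw [le_cast_iff, Quantaloid.cast_cast]
    exact (Quantaloid.cast_cast _ _ _ _ _).symm.trans_le h2

lemma SS_congr (hR : IsBisimulation V A B R) :
    ∀ {x x' : A.Obj ⊕ B.Obj}, E A B R x x' →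
      ∀ (h : ptW A B x = ptW A B x') (y₀),
        SS A B R x' y₀ = V.cast h rfl (SS A B R x y₀) := by
  intro x x' hE
  induction hE with
  | rel x y hxy =>
    intro h y₀
    cases x with
    | inl a =>
      cases y with
      | inl a' => exact hxy.elim
      | inr b =>
        exact le_antisymm ((cast_le_iff _ _ _ _).mp (SS_step_A A B R hR hxy h.symm y₀))
          (SS_step_B A B R hR hxy h y₀)
    | inr b =>
      cases y with
      | inl a =>
        exact le_antisymm ((cast_le_iff _ _ _ _).mp (SS_step_B A B R hR hxy h.symm y₀))
          (SS_step_A A B R hR hxy h y₀)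
      | inr b' => exact hxy.elim
  | refl x =>
    intro h y₀
    exact (cast_self h rfl _).symm
  | symm x y hxy ih =>
    intro h y₀
    rw [ih h.symm y₀, Quantaloid.cast_cast, cast_self]
  | trans x y z hxy hyz ih1 ih2 =>
    intro h y₀
    rw [ih2 (ptE A B R hR hyz) y₀, ih1 (ptE A B R hR hxy) y₀, Quantaloid.cast_cast]

end BIC

namespace BIC

open Quantaloid Relation

variable {V : Quantaloid} (A B : VCat V) (R : A.Obj → B.Obj → Prop)

/-- The setoid of zigzag equivalence. -/
def sE : Setoid (A.Obj ⊕ B.Obj) := ⟨E A B R, Relation.EqvGen.is_equivalence _⟩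

lemma outE (w : A.Obj ⊕ B.Obj) : E A B R (Quotient.mk (sE A B R) w).out w :=
  @Quotient.mk_out _ (sE A B R) w

lemma outE' (w : A.Obj ⊕ B.Obj) : E A B R w (Quotient.mk (sE A B R) w).out :=
  (sE A B R).iseqv.symm (outE A B R w)

/-- The quotient `V`-category. -/
noncomputable def Cc (hR : IsBisimulation V A B R) : VCat V where
  Obj := Quotient (sE A B R)
  pt X := ptW A B X.out
  hom X Y := SS A B R X.out Y.out
  id_le X :=
    le_trans (homW_id_le A B X.out)
      (le_SS A B R (z := X.out) X.out rfl (EqvGen.refl _))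
  comp_le X Y Z := by
    refine le_trans (le_of_eq (V.comp_sSup_left _ _)) ?_
    apply sSup_le; rintro _ ⟨f, ⟨w, hw, hEw, rfl⟩, rfl⟩
    beta_reduce
    rw [SS_congr A B R hR hEw hw Z.out]
    rw [← cast_comp, cast_self]
    refine le_trans (le_of_eq (V.comp_sSup_right _ _)) ?_
    apply sSup_le; rintro _ ⟨g, ⟨u, hu, hEu, rfl⟩, rfl⟩
    beta_reduce
    rw [show V.comp (homW A B X.out w) (V.cast rfl hu (homW A B w u)) =
        V.cast rfl hu (V.comp (homW A B X.out w) (homW A B w u)) from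
      (V.cast_comp rfl rfl hu _ _).symm]
    exact le_trans (cast_mono rfl hu (homW_comp_le A B X.out w u))
      (le_SS A B R X.out hu hEu)

/-- The left leg `A → C`. -/
noncomputable def pF (hR : IsBisimulation V A B R) : VFunctor V A (Cc A B R hR) where
  toFun a := Quotient.mk (sE A B R) (Sum.inl a)
  pt_eq a := ptE A B R hR (outE A B R (Sum.inl a))
  map_le a a' := by
    have hE1 := outE' A B R (Sum.inl a)
    have hE2 := outE' A B R (Sum.inl a')
    have h1 := ptE A B R hR hE1
    have h2 := ptE A B R hR hE2
    have key := SS_congr A B R hR hE1 h1 (Quotient.mk (sE A B R) (Sum.inl a')).out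
    have hgen := le_SS A B R (z := Sum.inl a') (Sum.inl a) h2 hE2
    have hmain := cast_mono h1 rfl hgen
    rw [Quantaloid.cast_cast] at hmain
    exact le_of_le_of_eq hmain key.symm

/-- The right leg `B → C`. -/
noncomputable def qF (hR : IsBisimulation V A B R) : VFunctor V B (Cc A B R hR) where
  toFun b := Quotient.mk (sE A B R) (Sum.inr b)
  pt_eq b := ptE A B R hR (outE A B R (Sum.inr b))
  map_le b b' := by
    have hE1 := outE' A B R (Sum.inr b)
    have hE2 := outE' A B R (Sum.inr b')
    have h1 := ptE A B R hR hE1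
    have h2 := ptE A B R hR hE2
    have key := SS_congr A B R hR hE1 h1 (Quotient.mk (sE A B R) (Sum.inr b')).out
    have hgen := le_SS A B R (z := Sum.inr b') (Sum.inr b) h2 hE2
    have hmain := cast_mono h1 rfl hgen
    rw [Quantaloid.cast_cast] at hmain
    exact le_of_le_of_eq hmain key.symm

end BIC

namespace BIC

open Quantaloid Relation

variable {V : Quantaloid} (A B : VCat V) (R : A.Obj → B.Obj → Prop)

lemma pF_sfb (hR : IsBisimulation V A B R) (hTB : ∀ b, ∃ a, R a b) :
    (pF A B R hR).IsSFB := by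
  constructor
  · intro Y
    obtain ⟨w, hw⟩ := Quotient.exists_rep Y
    cases w with
    | inl a => exact ⟨a, hw⟩
    | inr b =>
      obtain ⟨a, ha⟩ := hTB b
      refine ⟨a, ?_⟩
      refine Eq.trans (Quotient.sound ?_) hw
      exact EqvGen.rel _ _ (show Step A B R (Sum.inl a) (Sum.inr b) from ha)
  · intro a Y
    have hE1 := outE' A B R (Sum.inl a)
    have h1 := ptE A B R hR hE1
    have key := SS_congr A B R hR hE1 h1 Y.out
    apply le_antisymm
    · refine le_of_eq_of_le key ?_
      refine (cast_sSup_le_iff h1 rfl _ _).mpr ?_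
      rintro f ⟨z, hz, hEz, rfl⟩
      cases z with
      | inr b' =>
        rw [show homW A B (Sum.inl a) (Sum.inr b') = ⊥ from rfl, cast_bot, cast_bot]
        exact bot_le
      | inl a' =>
        rw [Quantaloid.cast_cast]
        refine le_sSup ⟨a', (Quotient.sound hEz).trans (Quotient.out_eq Y), rfl⟩
    · apply sSup_le
      rintro x ⟨a', hq, rfl⟩
      have hE2 : E A B R (Sum.inl a') Y.out :=
        Quotient.exact (hq.trans (Quotient.out_eq Y).symm)
      have h2 := ptE A B R hR hE2
      have hgen := le_SS A B R (z := Sum.inl a') (Sum.inl a) h2 hE2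
      have hmain := cast_mono h1 rfl hgen
      rw [Quantaloid.cast_cast] at hmain
      exact le_of_le_of_eq hmain key.symm

lemma qF_sfb (hR : IsBisimulation V A B R) (hTA : ∀ a, ∃ b, R a b) :
    (qF A B R hR).IsSFB := by
  constructor
  · intro Y
    obtain ⟨w, hw⟩ := Quotient.exists_rep Y
    cases w with
    | inr b => exact ⟨b, hw⟩
    | inl a =>
      obtain ⟨b, hb⟩ := hTA a
      refine ⟨b, ?_⟩
      refine Eq.trans (Quotient.sound ?_) hw
      exact EqvGen.rel _ _ (show Step A B R (Sum.inr b) (Sum.inl a) from hb)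
  · intro b Y
    have hE1 := outE' A B R (Sum.inr b)
    have h1 := ptE A B R hR hE1
    have key := SS_congr A B R hR hE1 h1 Y.out
    apply le_antisymm
    · refine le_of_eq_of_le key ?_
      refine (cast_sSup_le_iff h1 rfl _ _).mpr ?_
      rintro f ⟨z, hz, hEz, rfl⟩
      cases z with
      | inl a' =>
        rw [show homW A B (Sum.inr b) (Sum.inl a') = ⊥ from rfl, cast_bot, cast_bot]
        exact bot_le
      | inr b' =>
        rw [Quantaloid.cast_cast]
        refine le_sSup ⟨b', (Quotient.sound hEz).trans (Quotient.out_eq Y), rfl⟩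
    · apply sSup_le
      rintro x ⟨b', hq, rfl⟩
      have hE2 : E A B R (Sum.inr b') Y.out :=
        Quotient.exact (hq.trans (Quotient.out_eq Y).symm)
      have h2 := ptE A B R hR hE2
      have hgen := le_SS A B R (z := Sum.inr b') (Sum.inr b) h2 hE2
      have hmain := cast_mono h1 rfl hgen
      rw [Quantaloid.cast_cast] at hmain
      exact le_of_le_of_eq hmain key.symm

end BIC

namespace BIC

open Quantaloid

variable {V : Quantaloid}

lemma hom_congr (C : VCat V) {x x' y : C.Obj} (h : x = x') :
    C.hom x y = V.cast (congrArg C.pt h).symm rfl (C.hom x' y) := by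
  subst h; rfl

lemma sim_of_cospan (A B : VCat V) {C : VCat V} (p : VFunctor V A C) (q : VFunctor V B C)
    (hq : q.IsSFB) (S : A.Obj → B.Obj → Prop)
    (hS : ∀ a b, S a b → p.toFun a = q.toFun b)
    (hS' : ∀ a b, p.toFun a = q.toFun b → S a b) :
    IsSimulation V A B S := by
  constructor
  · intro a b hab
    exact (p.pt_eq a).symm.trans ((congrArg C.pt (hS a b hab)).trans (q.pt_eq b))
  · intro a b hab a' h
    have hab' := hS a b hab
    have h1 := p.map_le a a'
    have h2 : C.hom (p.toFun a) (p.toFun a') =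
        V.cast (congrArg C.pt hab').symm rfl (C.hom (q.toFun b) (p.toFun a')) :=
      hom_congr C hab'
    rw [hq.2 b (p.toFun a')] at h2
    have h3 := le_of_le_of_eq h1 h2
    have h4 := cast_mono ((congrArg C.pt hab').trans (q.pt_eq b)) (p.pt_eq a') h3
    rw [Quantaloid.cast_cast, Quantaloid.cast_cast, cast_sSup] at h4
    have h5 : V.cast h rfl (A.hom a a') ≤
        sSup (V.cast (q.pt_eq b) (p.pt_eq a') ''
          {x : V.Hom (C.pt (q.toFun b)) (C.pt (p.toFun a')) | ∃ (b' : B.Obj) (hb' : q.toFun b' = p.toFun a'),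
            x = V.cast (q.pt_eq b).symm ((q.pt_eq b').symm.trans (congrArg C.pt hb'))
              (B.hom b b')}) := h4
    refine le_trans h5 (sSup_le ?_)
    rintro _ ⟨x, ⟨b', hb', rfl⟩, rfl⟩
    rw [Quantaloid.cast_cast]
    refine le_sSup ⟨b', ?_, hS' a' b' hb'.symm, rfl⟩
    exact (p.pt_eq a').symm.trans ((congrArg C.pt hb').symm.trans (q.pt_eq b'))

end BIC

/-- `A` and `B` are bisimilar iff there is a cospan
`A → C ← B` of surjective functional bisimulations. -/
theorem bisimilar_iff_cospan (V : Quantaloid) (A B : VCat V) :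
    Bisimilar V A B ↔
      ∃ (C : VCat V) (p : VFunctor V A C) (q : VFunctor V B C),
        p.IsSFB ∧ q.IsSFB := by
  constructor
  · rintro ⟨R, hR, hTA, hTB⟩
    exact ⟨BIC.Cc A B R hR, BIC.pF A B R hR, BIC.qF A B R hR,
      BIC.pF_sfb A B R hR hTB, BIC.qF_sfb A B R hR hTA⟩
  · rintro ⟨C, p, q, hp, hq⟩
    refine ⟨fun a b => p.toFun a = q.toFun b, ⟨?_, ?_⟩, ?_, ?_⟩
    · exact BIC.sim_of_cospan A B p q hq _ (fun _ _ h => h) (fun _ _ h => h)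
    · exact BIC.sim_of_cospan B A q p hp _ (fun _ _ h => h.symm) (fun _ _ h => h.symm)
    · intro a
      obtain ⟨b, hb⟩ := hq.1 (p.toFun a)
      exact ⟨b, hb.symm⟩
    · intro b
      obtain ⟨a, ha⟩ := hp.1 (q.toFun b)
      exact ⟨a, ha⟩
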